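/- (Invariance of Dini derivatives under Lipschitz composition with an implicit map.) Let E be a Banach space, f : E → ℝ Lipschitz near x̂ = â + b̂, and φ a map defined near â with φ(â) = b̂ that is Fréchet differentiable at â with d_F φ(â) = 0. Define g(x) = f(x + φ(x)). Then for every direction μ, D^- g(â)(μ) = D^- f(x̂)(μ), and consequently D^-_M g(â)(μ) = D^-_M f(x̂)(μ). -/

import Mathlib

open Filter Topology

lemma liminf_le_of_tendsto_sub' {ι : Type*} {l : Filter ι} [l.NeBot] {a b : ι → ℝ}
    (h : Tendsto (fun t => a t - b t) l (𝓝 0))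
    (ha2 : IsBoundedUnder (· ≥ ·) l a)
    (hb1 : IsBoundedUnder (· ≤ ·) l b) (hb2 : IsBoundedUnder (· ≥ ·) l b) :
    liminf a l ≤ liminf b l := by
  refine le_of_forall_pos_le_add fun ε hε => ?_
  have hev : ∀ᶠ t in l, a t ≤ b t + ε := by
    filter_upwards [NormedAddCommGroup.tendsto_nhds_zero.1 h ε hε] with t ht
    have := (abs_lt.1 (by simpa using ht)).2
    linarith
  have hb1' : IsBoundedUnder (· ≤ ·) l (fun t => b t + ε) := by
    obtain ⟨c, hc⟩ := hb1
    exact ⟨c + ε, eventually_map.2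
      (by filter_upwards [eventually_map.1 hc] with t ht; exact add_le_add ht le_rfl)⟩
  calc liminf a l ≤ liminf (fun t => b t + ε) l :=
        liminf_le_liminf hev ha2 hb1'.isCoboundedUnder_ge
    _ = liminf b l + ε := liminf_add_const l b ε hb1.isCoboundedUnder_ge hb2

lemma liminf_eq_of_tendsto_sub' {ι : Type*} {l : Filter ι} [l.NeBot] {a b : ι → ℝ}
    (h : Tendsto (fun t => a t - b t) l (𝓝 0))
    (hb1 : IsBoundedUnder (· ≤ ·) l b) (hb2 : IsBoundedUnder (· ≥ ·) l b) :
    liminf a l = liminf b l := by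
  have hev : ∀ᶠ t in l, |a t - b t| ≤ 1 := by
    filter_upwards [NormedAddCommGroup.tendsto_nhds_zero.1 h 1 one_pos] with t ht
    exact le_of_lt (by simpa using ht)
  have ha1 : IsBoundedUnder (· ≤ ·) l a := by
    obtain ⟨c, hc⟩ := hb1
    refine ⟨c + 1, eventually_map.2 ?_⟩
    filter_upwards [eventually_map.1 hc, hev] with t h1 h2
    have := (abs_le.1 h2).2
    linarith
  have ha2 : IsBoundedUnder (· ≥ ·) l a := by
    obtain ⟨c, hc⟩ := hb2
    refine ⟨c - 1, eventually_map.2 ?_⟩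
    filter_upwards [eventually_map.1 hc, hev] with t h1 h2
    have := (abs_le.1 h2).1
    linarith
  have h' : Tendsto (fun t => b t - a t) l (𝓝 0) := by
    simpa using h.neg
  exact le_antisymm (liminf_le_of_tendsto_sub' h ha2 hb1 hb2)
    (liminf_le_of_tendsto_sub' h' hb2 ha1 ha2)


variable {E : Type*} [NormedAddCommGroup E] [NormedSpace ℝ E]

/-- Difference quotient of `f` at `x` in direction `u`. -/
noncomputable def diniQuot (f : E → ℝ) (x u : E) : ℝ → ℝ :=
  fun t => (f (x + t • u) - f x) / t

/-- Lower Dini derivative `D⁻ f(x)(u)`. -/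
noncomputable def lowerDini (f : E → ℝ) (x u : E) : ℝ :=
  liminf (diniQuot f x u) (𝓝[>] 0)

/-- Upper Dini derivative `D⁺ f(x)(u)`. -/
noncomputable def upperDini (f : E → ℝ) (x u : E) : ℝ :=
  limsup (diniQuot f x u) (𝓝[>] 0)

/-- Modified lower Dini derivative `D⁻_M f(x)(u)`. -/
noncomputable def lowerDiniM (f : E → ℝ) (x u : E) : ℝ :=
  ⨅ w : E, (lowerDini f x (u + w) - lowerDini f x w)

/-- Modified upper Dini derivative `D⁺_M f(x)(u)`. -/
noncomputable def upperDiniM (f : E → ℝ) (x u : E) : ℝ :=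
  ⨆ w : E, (upperDini f x (u + w) - upperDini f x w)

/-- The difference quotients of `f` at `x` in direction `u` are bounded near `0⁺`,
so that the lower/upper Dini derivatives are genuine (finite) values. -/
def DiniFinite (f : E → ℝ) (x u : E) : Prop :=
  IsBoundedUnder (· ≤ ·) (𝓝[>] (0:ℝ)) (diniQuot f x u) ∧
  IsBoundedUnder (· ≥ ·) (𝓝[>] (0:ℝ)) (diniQuot f x u)

/-- Finiteness of the modified lower Dini derivative. -/
def LowerDiniMFinite (f : E → ℝ) (x u : E) : Prop :=
  BddBelow (Set.range fun w : E => lowerDini f x (u + w) - lowerDini f x w)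

/-- Finiteness of the modified upper Dini derivative. -/
def UpperDiniMFinite (f : E → ℝ) (x u : E) : Prop :=
  BddAbove (Set.range fun w : E => upperDini f x (u + w) - upperDini f x w)

/-- invariance of Dini derivatives under Lipschitz composition
with an implicit map: with `E = K ⊕ E₁`, `xh = ah + bh`, `f` Lipschitz near
`xh`, and `φ` mapping a neighborhood of `ah` in `K` into `E₁` with `φ ah = bh`
and zero Fréchet derivative (within `K`) at `ah`, the function
`g x = f (x + φ x)` has the same lower Dini derivative and the same modified
lower Dini derivative (in directions of `K`) at `ah` as `f` at `xh`. -/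
theorem dini_implicit_composition [CompleteSpace E]
    (K E₁ : Submodule ℝ E) (hK : IsClosed (K : Set E)) (hE₁ : IsClosed (E₁ : Set E))
    (hcompl : IsCompl K E₁)
    (ah bh : E) (hah : ah ∈ K) (hbh : bh ∈ E₁) (xh : E) (hxh : xh = ah + bh)
    (f : E → ℝ) (L : NNReal) (s : Set E) (hs : s ∈ 𝓝 xh) (hf : LipschitzOnWith L f s)
    (φ : E → E) (U : Set E) (hU : U ∈ 𝓝[(K : Set E)] ah)
    (hmaps : ∀ x ∈ U, φ x ∈ E₁) (hφa : φ ah = bh)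
    (hφd : HasFDerivWithinAt φ (0 : E →L[ℝ] E) (K : Set E) ah) :
    (∀ μ ∈ K, lowerDini (fun x => f (x + φ x)) ah μ = lowerDini f xh μ) ∧
    (∀ μ ∈ K,
      (⨅ w : K, (lowerDini (fun x => f (x + φ x)) ah (μ + (w : E)) -
        lowerDini (fun x => f (x + φ x)) ah (w : E))) =
      ⨅ w : K, (lowerDini f xh (μ + (w : E)) - lowerDini f xh (w : E))) := by
  have hxs : xh ∈ s := mem_of_mem_nhds hs
  have part1 : ∀ μ ∈ K, lowerDini (fun x => f (x + φ x)) ah μ = lowerDini f xh μ := by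
    intro μ hμ
    -- the curve t ↦ ah + t μ tends to ah within K
    have htK : Tendsto (fun t : ℝ => ah + t • μ) (𝓝[>] 0) (𝓝[(K : Set E)] ah) := by
      refine tendsto_nhdsWithin_iff.2 ⟨?_, Eventually.of_forall fun t =>
        K.add_mem hah (K.smul_mem t hμ)⟩
      have hcc : Continuous fun t : ℝ => ah + t • μ := by fun_prop
      have hcont : Tendsto (fun t : ℝ => ah + t • μ) (𝓝 0) (𝓝 ah) := by
        simpa using hcc.tendsto (0:ℝ)
      exact hcont.mono_left nhdsWithin_le_nhds
    have hφcont : Tendsto (fun t : ℝ => φ (ah + t • μ)) (𝓝[>] 0) (𝓝 bh) := by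
      have hc := hφd.continuousWithinAt
      rw [ContinuousWithinAt, hφa] at hc
      exact hc.comp htK
    have hmem1 : ∀ᶠ t in 𝓝[>] (0:ℝ), xh + t • μ ∈ s := by
      have hcc : Continuous fun t : ℝ => xh + t • μ := by fun_prop
      have hcont : Tendsto (fun t : ℝ => xh + t • μ) (𝓝[>] 0) (𝓝 xh) := by
        exact (by simpa using hcc.tendsto (0:ℝ) :
          Tendsto (fun t : ℝ => xh + t • μ) (𝓝 0) (𝓝 xh)).mono_left nhdsWithin_le_nhds
      exact hcont.eventually_mem hs
    have hmem2 : ∀ᶠ t in 𝓝[>] (0:ℝ), ah + t • μ + φ (ah + t • μ) ∈ s := by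
      have hcont : Tendsto (fun t : ℝ => ah + t • μ + φ (ah + t • μ)) (𝓝[>] 0) (𝓝 xh) := by
        rw [hxh]
        exact (htK.mono_right nhdsWithin_le_nhds).add hφcont
      exact hcont.eventually_mem hs
    have ho : (fun t : ℝ => φ (ah + t • μ) - bh) =o[𝓝[>] 0] fun t : ℝ => t • μ := by
      have h1 := hφd.isLittleO
      have h2 := h1.comp_tendsto htK
      simp only [Function.comp_def, hφa, ContinuousLinearMap.zero_apply, sub_zero,
        add_sub_cancel_left] at h2
      exact h2
    have key : Tendsto (fun t => diniQuot (fun x => f (x + φ x)) ah μ t - diniQuot f xh μ t)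
        (𝓝[>] 0) (𝓝 0) := by
      rw [NormedAddCommGroup.tendsto_nhds_zero]
      intro ε hε
      set c : ℝ := ε / (2 * ((L : ℝ) * ‖μ‖ + 1)) with hcdef
      have hc : 0 < c := div_pos hε (by positivity)
      have hlt : (L : ℝ) * c * ‖μ‖ < ε := by
        have hX : (0:ℝ) < 2 * ((L : ℝ) * ‖μ‖ + 1) := by positivity
        have h1 : (L : ℝ) * c * ‖μ‖ < (2 * ((L : ℝ) * ‖μ‖ + 1)) * c := by
          have hX0 : (0:ℝ) ≤ (L : ℝ) * ‖μ‖ := by positivity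
          have : (L : ℝ) * ‖μ‖ < 2 * ((L : ℝ) * ‖μ‖ + 1) := by linarith
          calc (L : ℝ) * c * ‖μ‖ = ((L : ℝ) * ‖μ‖) * c := by ring
            _ < (2 * ((L : ℝ) * ‖μ‖ + 1)) * c := mul_lt_mul_of_pos_right this hc
        calc (L : ℝ) * c * ‖μ‖ < (2 * ((L : ℝ) * ‖μ‖ + 1)) * c := h1
          _ = ε := by rw [hcdef]; field_simp
      filter_upwards [hmem1, hmem2, ho.def hc, self_mem_nhdsWithin] with t h1 h2 h3 ht'
      have ht : (0:ℝ) < t := ht'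
      have hq : diniQuot (fun x => f (x + φ x)) ah μ t - diniQuot f xh μ t
          = (f (ah + t • μ + φ (ah + t • μ)) - f (xh + t • μ)) / t := by
        simp only [diniQuot, hφa, ← hxh, div_sub_div_same]
        congr 1
        ring
      rw [hq]
      have hpt : ‖ah + t • μ + φ (ah + t • μ) - (xh + t • μ)‖ = ‖φ (ah + t • μ) - bh‖ := by
        rw [hxh]
        congr 1
        abel
      have hd : |f (ah + t • μ + φ (ah + t • μ)) - f (xh + t • μ)|
          ≤ (L : ℝ) * ‖φ (ah + t • μ) - bh‖ := by
        have := hf.dist_le_mul _ h2 _ h1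
        rw [Real.dist_eq, dist_eq_norm] at this
        rw [← hpt]
        exact this
      have hnorm : ‖t • μ‖ = t * ‖μ‖ := by
        rw [norm_smul, Real.norm_eq_abs, abs_of_pos ht]
      have hfinal : |(f (ah + t • μ + φ (ah + t • μ)) - f (xh + t • μ)) / t|
          ≤ (L : ℝ) * c * ‖μ‖ := by
        rw [abs_div, abs_of_pos ht, div_le_iff₀ ht]
        calc |f (ah + t • μ + φ (ah + t • μ)) - f (xh + t • μ)|
            ≤ (L : ℝ) * ‖φ (ah + t • μ) - bh‖ := hd
          _ ≤ (L : ℝ) * (c * ‖t • μ‖) := by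
              exact mul_le_mul_of_nonneg_left h3 (by positivity)
          _ = (L : ℝ) * c * ‖μ‖ * t := by rw [hnorm]; ring
      rw [Real.norm_eq_abs]
      exact lt_of_le_of_lt hfinal hlt
    -- boundedness of the difference quotients of f
    have hb : ∀ᶠ t in 𝓝[>] (0:ℝ), |diniQuot f xh μ t| ≤ (L : ℝ) * ‖μ‖ := by
      filter_upwards [hmem1, self_mem_nhdsWithin] with t h1 ht'
      have ht : (0:ℝ) < t := ht'
      unfold diniQuot
      have hd : |f (xh + t • μ) - f xh| ≤ (L : ℝ) * (t * ‖μ‖) := by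
        have := hf.dist_le_mul _ h1 _ hxs
        rw [Real.dist_eq, dist_eq_norm] at this
        simpa [norm_smul, Real.norm_eq_abs, abs_of_pos ht] using this
      rw [abs_div, abs_of_pos ht, div_le_iff₀ ht]
      calc |f (xh + t • μ) - f xh| ≤ (L : ℝ) * (t * ‖μ‖) := hd
        _ = (L : ℝ) * ‖μ‖ * t := by ring
    have hb1 : IsBoundedUnder (· ≤ ·) (𝓝[>] (0:ℝ)) (diniQuot f xh μ) :=
      ⟨(L : ℝ) * ‖μ‖, eventually_map.2 (hb.mono fun t h => (abs_le.1 h).2)⟩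
    have hb2 : IsBoundedUnder (· ≥ ·) (𝓝[>] (0:ℝ)) (diniQuot f xh μ) :=
      ⟨-((L : ℝ) * ‖μ‖), eventually_map.2 (hb.mono fun t h => (abs_le.1 h).1)⟩
    exact liminf_eq_of_tendsto_sub' key hb1 hb2
  refine ⟨part1, fun μ hμ => iInf_congr fun w => ?_⟩
  rw [part1 _ (K.add_mem hμ w.2), part1 _ w.2]
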